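/- Let a > 0, let v ∈ C¹[0,a] with v(0) = 0 and v'(0) ≠ 0, and let F be C¹ on an open set containing the graph of φ with F(φ(0), 0) = 0. Suppose φ is Lipschitz on [0,a], C¹ on (0,a], solves v(r)·φ'(r) = F(φ(r), r) on (0,a], and γ := F_φ(φ(0),0)/v'(0) ∈ [0,1). Then φ is differentiable at 0 with derivative F_r(φ(0),0)/(v'(0) - F_φ(φ(0),0)), and lim_{r→0⁺} φ'(r) equals this value. -/

import Mathlib

open Real Set Filter
open scoped Topology

theorem stmt_13 (a : ℝ) (ha : 0 < a)
    (v v' φ φ' : ℝ → ℝ) (F : ℝ → ℝ → ℝ) (Fx Fr : ℝ)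
    -- v ∈ C¹[0,a] with derivative v'
    (hv : ∀ r ∈ Set.Icc (0:ℝ) a, HasDerivWithinAt v (v' r) (Set.Icc 0 a) r)
    (hv'c : ContinuousOn v' (Set.Icc 0 a))
    (hv0 : v 0 = 0) (hv'0 : v' 0 ≠ 0)
    -- F is C¹ on an open set U containing the graph {(φ r, r) : 0 ≤ r ≤ a}
    (U : Set (ℝ × ℝ)) (hU : IsOpen U)
    (hgraph : ∀ r ∈ Set.Icc (0:ℝ) a, (φ r, r) ∈ U)
    (hF : ContDiffOn ℝ 1 (fun p : ℝ × ℝ => F p.1 p.2) U)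
    (hF0 : F (φ 0) 0 = 0)
    -- partial derivatives of F at (φ 0, 0)
    (hFx : HasDerivAt (fun x => F x 0) Fx (φ 0))
    (hFr : HasDerivAt (fun t => F (φ 0) t) Fr 0)
    -- φ ∈ C[0,a] ∩ C¹(0,a] solves v·φ' = F(φ,·)
    (L : NNReal) (hφlip : LipschitzOnWith L φ (Set.Icc 0 a))
    (hφ' : ∀ r ∈ Set.Ioc (0:ℝ) a, HasDerivAt φ (φ' r) r)
    (hφ'c : ContinuousOn φ' (Set.Ioc 0 a))
    (heq : ∀ r ∈ Set.Ioc (0:ℝ) a, v r * φ' r = F (φ r) r)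
    -- γ := Fx / v'(0) ∈ [0,1)
    (hγ0 : 0 ≤ Fx / v' 0) (hγ1 : Fx / v' 0 < 1) :
    HasDerivWithinAt φ (Fr / (v' 0 - Fx)) (Set.Ici 0) 0 ∧
    Filter.Tendsto φ' (nhdsWithin 0 (Set.Ioi 0)) (nhds (Fr / (v' 0 - Fx))) := by
  have hc := hv'0
  have hβpos : (0:ℝ) < 1 - Fx / v' 0 := by linarith
  have hcFx : v' 0 - Fx ≠ 0 := by
    intro h
    have : Fx = v' 0 := by linarith
    rw [this, div_self hc] at hγ1
    linarith
  set γ : ℝ := Fx / v' 0 with hγ_def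
  set D : ℝ := Fr / (v' 0 - Fx) with hD_def
  set u : ℝ → ℝ := fun r => (φ r - φ 0) / r with hu_def
  set η1 : ℝ → ℝ := fun r => (F (φ r) r - Fx * (φ r - φ 0) - Fr * r) / r with hη1_def
  set η : ℝ → ℝ := fun r => φ' r - γ * u r - Fr / v' 0 with hη_def
  have hγD : (1 - γ) * D = Fr / v' 0 := by
    rw [hγ_def, hD_def]
    field_simp
  -- φ bound
  have hφbound : ∀ r ∈ Icc (0:ℝ) a, |φ r - φ 0| ≤ L * r := by
    intro r hr
    have := hφlip.dist_le_mul r hr 0 ⟨le_refl 0, ha.le⟩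
    rwa [Real.dist_eq, Real.dist_eq, sub_zero, abs_of_nonneg hr.1] at this
  have hubound : ∀ r ∈ Ioc (0:ℝ) a, |u r| ≤ L := by
    intro r hr
    rw [hu_def]
    rw [abs_div, abs_of_pos hr.1, div_le_iff₀ hr.1]
    exact hφbound r ⟨hr.1.le, hr.2⟩
  -- membership eventualities
  have hIoc : Ioc (0:ℝ) a ∈ 𝓝[>] (0:ℝ) := Ioc_mem_nhdsGT_of_mem ⟨le_refl 0, ha⟩
  -- v slope
  have hvslope : Tendsto (fun r => v r / r) (𝓝[>] (0:ℝ)) (𝓝 (v' 0)) := by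
    have h0 := (hv 0 ⟨le_refl 0, ha.le⟩)
    rw [hasDerivWithinAt_iff_tendsto_slope] at h0
    have hsub : 𝓝[>] (0:ℝ) ≤ 𝓝[Icc 0 a \ {0}] (0:ℝ) := by
      rw [← nhdsWithin_Ioc_eq_nhdsGT ha]
      apply nhdsWithin_mono
      intro x hx
      exact ⟨⟨hx.1.le, hx.2⟩, ne_of_gt hx.1⟩
    have := h0.mono_left hsub
    apply this.congr
    intro s
    rw [slope_def_field, sub_zero, hv0, sub_zero]
  have hvne : ∀ᶠ r in 𝓝[>] (0:ℝ), v r ≠ 0 := by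
    have hne : {x : ℝ | x ≠ 0} ∈ 𝓝 (v' 0) := (isOpen_ne).mem_nhds hc
    filter_upwards [hvslope.eventually_mem hne, self_mem_nhdsWithin] with r h1 h2
    intro hv0'
    rw [hv0', zero_div] at h1
    exact h1 rfl
  have hrv : Tendsto (fun r => r / v r) (𝓝[>] (0:ℝ)) (𝓝 (v' 0)⁻¹) := by
    have := hvslope.inv₀ hc
    apply this.congr'
    filter_upwards [self_mem_nhdsWithin, hvne] with r h1 h2
    rw [← one_div, one_div_div]
  -- differentiability of F at (φ 0, 0)
  have hmemU : ((φ 0, (0:ℝ))) ∈ U := hgraph 0 ⟨le_refl 0, ha.le⟩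
  have hFd : DifferentiableAt ℝ (fun p : ℝ × ℝ => F p.1 p.2) (φ 0, 0) :=
    ((hF.contDiffAt (hU.mem_nhds hmemU)).differentiableAt one_ne_zero)
  obtain ⟨f', hf'⟩ := hFd
  have hxe : f' (1, 0) = Fx := by
    have hcurve : HasDerivAt (fun x : ℝ => (x, (0:ℝ))) ((1:ℝ), (0:ℝ)) (φ 0) :=
      (hasDerivAt_id (φ 0)).prodMk (hasDerivAt_const (φ 0) 0)
    have := hf'.comp_hasDerivAt (φ 0) hcurve
    exact this.unique hFx
  have hye : f' (0, 1) = Fr := by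
    have hcurve : HasDerivAt (fun t : ℝ => (φ 0, t)) ((0:ℝ), (1:ℝ)) (0:ℝ) :=
      (hasDerivAt_const 0 (φ 0)).prodMk (hasDerivAt_id 0)
    have := hf'.comp_hasDerivAt 0 hcurve
    exact this.unique hFr
  have hlin : ∀ x y : ℝ, f' (x, y) = x * Fx + y * Fr := by
    intro x y
    have hxy : (x, y) = x • ((1:ℝ), (0:ℝ)) + y • ((0:ℝ), (1:ℝ)) := by
      simp [Prod.ext_iff]
    rw [hxy, map_add, map_smul, map_smul, hxe, hye, smul_eq_mul, smul_eq_mul]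
  -- continuity of φ at 0 from the right
  have hφcont : Tendsto (fun r => φ r) (𝓝[>] (0:ℝ)) (𝓝 (φ 0)) := by
    have : Tendsto (fun r => φ r - φ 0) (𝓝[>] (0:ℝ)) (𝓝 0) := by
      apply squeeze_zero_norm' (a := fun r => (L:ℝ) * r)
      · filter_upwards [hIoc] with r hr
        exact hφbound r ⟨hr.1.le, hr.2⟩
      · have : Tendsto (fun r : ℝ => (L:ℝ) * r) (𝓝 (0:ℝ)) (𝓝 ((L:ℝ) * 0)) :=
          (tendsto_id.const_mul _)
        rw [mul_zero] at this
        exact this.mono_left nhdsWithin_le_nhds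
    have := this.add_const (φ 0)
    simpa using this
  -- little-o estimate
  have hη1t : Tendsto η1 (𝓝[>] (0:ℝ)) (𝓝 0) := by
    have ho := hf'.isLittleO
    have hg : Tendsto (fun r : ℝ => (φ r, r)) (𝓝[>] (0:ℝ)) (𝓝 (φ 0, 0)) := by
      apply Tendsto.prodMk_nhds hφcont
      exact tendsto_nhdsWithin_of_tendsto_nhds tendsto_id
    have ho2 := ho.comp_tendsto hg
    have hbig : (fun r : ℝ => (φ r, r) - (φ 0, 0)) =O[𝓝[>] (0:ℝ)] (fun r : ℝ => r) := by
      rw [Asymptotics.isBigO_iff]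
      refine ⟨max L 1, ?_⟩
      filter_upwards [hIoc] with r hr
      rw [Prod.norm_def]
      simp only [Prod.fst_sub, Prod.snd_sub, sub_zero]
      apply sup_le
      · calc |φ r - φ 0| ≤ L * r := hφbound r ⟨hr.1.le, hr.2⟩
          _ ≤ max L 1 * |r| := by
            rw [abs_of_pos hr.1]
            exact mul_le_mul_of_nonneg_right (le_max_left _ _) hr.1.le
      · calc |r| = 1 * |r| := (one_mul _).symm
          _ ≤ max L 1 * |r| := mul_le_mul_of_nonneg_right (le_max_right _ _) (abs_nonneg r)
    have ho3 := ho2.trans_isBigO hbig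
    have hne0 : ∀ᶠ r in 𝓝[>] (0:ℝ), r = 0 → ((fun p : ℝ × ℝ => F p.1 p.2) ∘ fun r : ℝ => (φ r, r)) r - F (φ 0) 0 - f' ((φ r, r) - (φ 0, 0)) = 0 := by
      filter_upwards [self_mem_nhdsWithin] with r hr h0
      exact absurd h0 (ne_of_gt hr)
    have ho4 := (Asymptotics.isLittleO_iff_tendsto' hne0).mp ho3
    apply ho4.congr'
    filter_upwards [self_mem_nhdsWithin] with r hr
    have hsub : ((φ r, r) - ((φ 0), (0:ℝ))) = (φ r - φ 0, r - 0) := rfl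
    simp only [Function.comp_apply, hsub, hlin, hF0, hη1_def, sub_zero]
    ring
  -- formula for φ'
  have hφ'formula : ∀ᶠ r in 𝓝[>] (0:ℝ), φ' r = F (φ r) r / v r := by
    filter_upwards [hIoc, hvne] with r hr hvr
    rw [← heq r hr, mul_comm, mul_div_assoc, div_self hvr, mul_one]
  -- η tends to 0
  have hηt : Tendsto η (𝓝[>] (0:ℝ)) (𝓝 0) := by
    have hη1small : ∀ᶠ r in 𝓝[>] (0:ℝ), |η1 r| < 1 := by
      have := Metric.tendsto_nhds.mp hη1t 1 one_pos
      filter_upwards [this] with r h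
      rwa [Real.dist_eq, sub_zero] at h
    have hkey : ∀ᶠ r in 𝓝[>] (0:ℝ),
        (Fx * u r + Fr + η1 r) * (r / v r - (v' 0)⁻¹) + η1 r * (v' 0)⁻¹ = η r := by
      filter_upwards [hIoc, hvne, hφ'formula, self_mem_nhdsWithin] with r hr hvr hform hr0
      have hrne : r ≠ 0 := ne_of_gt hr0
      have hFexp : F (φ r) r = η1 r * r + Fx * (φ r - φ 0) + Fr * r := by
        rw [hη1_def]
        field_simp
        ring
      rw [hη_def]
      simp only
      rw [hform, hFexp, hγ_def, hu_def]
      simp only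
      field_simp
      ring
    have hB : Tendsto (fun r => r / v r - (v' 0)⁻¹) (𝓝[>] (0:ℝ)) (𝓝 0) := by
      simpa using hrv.sub_const (v' 0)⁻¹
    have hAbound : ∀ᶠ r in 𝓝[>] (0:ℝ), |Fx * u r + Fr + η1 r| ≤ |Fx| * L + |Fr| + 1 := by
      filter_upwards [hIoc, hη1small] with r hr h1
      calc |Fx * u r + Fr + η1 r| ≤ |Fx * u r + Fr| + |η1 r| := abs_add_le _ _
        _ ≤ (|Fx * u r| + |Fr|) + |η1 r| := by linarith [abs_add_le (Fx * u r) Fr]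
        _ ≤ |Fx| * L + |Fr| + 1 := by
            rw [abs_mul]
            have := hubound r hr
            have h2 : |Fx| * |u r| ≤ |Fx| * L := mul_le_mul_of_nonneg_left this (abs_nonneg _)
            linarith
    have hAB : Tendsto (fun r => (Fx * u r + Fr + η1 r) * (r / v r - (v' 0)⁻¹))
        (𝓝[>] (0:ℝ)) (𝓝 0) := by
      apply squeeze_zero_norm' (a := fun r => (|Fx| * L + |Fr| + 1) * |r / v r - (v' 0)⁻¹|)
      · filter_upwards [hAbound] with r h
        rw [Real.norm_eq_abs, abs_mul]
        exact mul_le_mul_of_nonneg_right h (abs_nonneg _)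
      · have := hB.abs.const_mul (|Fx| * (L:ℝ) + |Fr| + 1)
        simpa using this
    have hC : Tendsto (fun r => η1 r * (v' 0)⁻¹) (𝓝[>] (0:ℝ)) (𝓝 0) := by
      simpa using hη1t.mul_const (v' 0)⁻¹
    have hsum := hAB.add hC
    rw [add_zero] at hsum
    exact hsum.congr' hkey
  -- derivative of u
  have hu' : ∀ r ∈ Ioc (0:ℝ) a, HasDerivAt u ((φ' r - u r) / r) r := by
    intro r hr
    have h1 : HasDerivAt (fun s => φ s - φ 0) (φ' r) r := (hφ' r hr).sub_const _
    have h2 : HasDerivAt (fun s : ℝ => s) 1 r := hasDerivAt_id r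
    have h3 := h1.div h2 (ne_of_gt hr.1)
    have heq2 : (φ' r * r - (φ r - φ 0) * 1) / r ^ 2 = (φ' r - u r) / r := by
      have hrne : r ≠ 0 := ne_of_gt hr.1
      rw [hu_def]
      field_simp
    rw [heq2] at h3
    exact h3
  -- derivative of G
  have hG' : ∀ r ∈ Ioc (0:ℝ) a,
      HasDerivAt (fun s => (u s - D) * s ^ (1 - γ)) (η r * r ^ (-γ)) r := by
    intro r hr
    have h1 : HasDerivAt (fun s => u s - D) ((φ' r - u r) / r) r := (hu' r hr).sub_const D
    have h2 : HasDerivAt (fun s : ℝ => s ^ (1 - γ)) ((1 - γ) * r ^ (1 - γ - 1)) r :=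
      Real.hasDerivAt_rpow_const (Or.inl (ne_of_gt hr.1))
    have h3 := h1.mul h2
    have key : (φ' r - u r) / r * r ^ (1 - γ) + (u r - D) * ((1 - γ) * r ^ (1 - γ - 1))
        = η r * r ^ (-γ) := by
      have e1 : r ^ (1 - γ - 1) = r ^ (-γ) := by rw [show (1 - γ - 1 : ℝ) = -γ by ring]
      have e2 : r ^ (1 - γ) = r * r ^ (-γ) := by
        rw [show (1 - γ : ℝ) = 1 + -γ by ring, Real.rpow_add hr.1, Real.rpow_one]
      rw [e1, e2, hη_def]
      simp only
      rw [show Fr / v' 0 = (1 - γ) * D from hγD.symm]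
      field_simp [ne_of_gt hr.1]
      ring
    rw [key] at h3
    exact h3
  -- main epsilon estimate
  have hGbound : ∀ ε > (0:ℝ), ∀ᶠ r in 𝓝[>] (0:ℝ), |u r - D| ≤ ε := by
    intro ε hε
    set β : ℝ := 1 - γ with hβ_def
    set ε' : ℝ := ε * β with hε'_def
    have hε'pos : 0 < ε' := mul_pos hε hβpos
    have h1 : ∀ᶠ r in 𝓝[>] (0:ℝ), |η r| ≤ ε' := by
      have := Metric.tendsto_nhds.mp hηt ε' hε'pos
      filter_upwards [this] with r h
      rw [Real.dist_eq, sub_zero] at h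
      exact h.le
    obtain ⟨r0, hr0pos, hr0sub⟩ :=
      mem_nhdsGT_iff_exists_Ioc_subset.mp (Filter.eventually_iff.mp (h1.and hIoc))
    set G : ℝ → ℝ := fun s => (u s - D) * s ^ β with hG_def
    have hmono : ∀ σ : ℝ, |σ| = 1 →
        MonotoneOn (fun s => ε' / β * s ^ β + σ * G s) (Ioc 0 r0) := by
      intro σ hσ
      have hder : ∀ s ∈ Ioc (0:ℝ) r0, HasDerivAt (fun s => ε' / β * s ^ β + σ * G s)
          ((ε' + σ * η s) * s ^ (-γ)) s := by
        intro s hs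
        have hsa : s ∈ Ioc (0:ℝ) a := (hr0sub hs).2
        have h1 : HasDerivAt (fun s : ℝ => s ^ β) (β * s ^ (β - 1)) s :=
          Real.hasDerivAt_rpow_const (Or.inl (ne_of_gt hs.1))
        have h2 := (h1.const_mul (ε' / β)).add ((hG' s hsa).const_mul σ)
        have e1 : s ^ (β - 1) = s ^ (-γ) := by rw [show (β - 1 : ℝ) = -γ by rw [hβ_def]; ring]
        have e3 : ε' / β * (β * s ^ (β - 1)) + σ * (η s * s ^ (-γ))
            = (ε' + σ * η s) * s ^ (-γ) := by
          rw [e1]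
          have hβne : β ≠ 0 := ne_of_gt hβpos
          field_simp
        rw [e3] at h2
        exact h2
      apply monotoneOn_of_deriv_nonneg (convex_Ioc _ _)
      · intro s hs
        exact (hder s hs).continuousAt.continuousWithinAt
      · intro s hs
        rw [interior_Ioc] at hs
        exact (hder s (Ioo_subset_Ioc_self hs)).differentiableAt.differentiableWithinAt
      · intro s hs
        rw [interior_Ioc] at hs
        rw [(hder s (Ioo_subset_Ioc_self hs)).deriv]
        apply mul_nonneg _ (Real.rpow_nonneg hs.1.le _)
        have hηs := (hr0sub (Ioo_subset_Ioc_self hs)).1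
        have h5 : -(σ * η s) ≤ |σ * η s| := neg_le_abs _
        have h6 : |σ * η s| = |η s| := by rw [abs_mul, hσ, one_mul]
        linarith [hηs, h5, h6 ▸ h5]
    have hsβ : Tendsto (fun s : ℝ => s ^ β) (𝓝[>] (0:ℝ)) (𝓝 0) := by
      have hcont : ContinuousAt (fun s : ℝ => s ^ β) 0 :=
        Real.continuousAt_rpow_const 0 β (Or.inr hβpos.le)
      have : Tendsto (fun s : ℝ => s ^ β) (𝓝 (0:ℝ)) (𝓝 ((0:ℝ) ^ β)) := hcont
      rw [Real.zero_rpow (ne_of_gt hβpos)] at this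
      exact this.mono_left nhdsWithin_le_nhds
    have hG0 : Tendsto G (𝓝[>] (0:ℝ)) (𝓝 0) := by
      apply squeeze_zero_norm' (a := fun s => ((L:ℝ) + |D|) * s ^ β)
      · filter_upwards [hIoc] with s hs
        rw [hG_def]
        simp only [Real.norm_eq_abs]
        rw [abs_mul, abs_of_nonneg (Real.rpow_nonneg hs.1.le β)]
        apply mul_le_mul_of_nonneg_right _ (Real.rpow_nonneg hs.1.le β)
        calc |u s - D| ≤ |u s| + |D| := abs_sub _ _
          _ ≤ (L:ℝ) + |D| := by linarith [hubound s hs]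
      · simpa using hsβ.const_mul ((L:ℝ) + |D|)
    have hGr : ∀ r ∈ Ioc (0:ℝ) r0, |u r - D| ≤ ε := by
      intro r hr
      have hrβ : (0:ℝ) < r ^ β := Real.rpow_pos_of_pos hr.1 β
      have hineq : ∀ σ : ℝ, |σ| = 1 → -(ε' / β * r ^ β) ≤ σ * G r := by
        intro σ hσ
        have hlim : Tendsto (fun s => ε' / β * s ^ β + σ * G s) (𝓝[>] (0:ℝ)) (𝓝 0) := by
          have := (hsβ.const_mul (ε' / β)).add (hG0.const_mul σ)
          simpa using this
        have hev2 : ∀ᶠ s in 𝓝[>] (0:ℝ),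
            ε' / β * s ^ β + σ * G s ≤ ε' / β * r ^ β + σ * G r := by
          filter_upwards [Ioo_mem_nhdsGT_of_mem (⟨le_refl 0, hr.1⟩ : (0:ℝ) ∈ Ico 0 r)] with s hs
          exact hmono σ hσ ⟨hs.1, hs.2.le.trans hr.2⟩ hr hs.2.le
        have := le_of_tendsto hlim hev2
        linarith
      have hp1 := hineq 1 (by norm_num)
      have hp2 := hineq (-1) (by norm_num)
      rw [one_mul] at hp1
      rw [neg_one_mul] at hp2
      have hGabs : |G r| ≤ ε' / β * r ^ β := abs_le.mpr ⟨hp1, by linarith⟩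
      rw [hG_def] at hGabs
      simp only at hGabs
      rw [abs_mul, abs_of_nonneg (Real.rpow_nonneg hr.1.le β)] at hGabs
      have hεβ : ε' / β = ε := by
        rw [hε'_def]
        field_simp
      rw [hεβ] at hGabs
      exact le_of_mul_le_mul_right hGabs hrβ
    filter_upwards [Ioc_mem_nhdsGT_of_mem (⟨le_refl 0, hr0pos⟩ : (0:ℝ) ∈ Ico 0 r0)] with r hr
    exact hGr r hr
  have hmain : Tendsto u (𝓝[>] (0:ℝ)) (𝓝 D) := by
    rw [Metric.tendsto_nhds]
    intro ε hε
    filter_upwards [hGbound (ε / 2) (by linarith)] with r h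
    rw [Real.dist_eq]
    linarith
  constructor
  · rw [hasDerivWithinAt_iff_tendsto_slope, Ici_sdiff_left]
    apply hmain.congr
    intro s
    rw [slope_def_field, sub_zero, hu_def]
  · have h := hηt.add ((hmain.const_mul γ).add_const (Fr / v' 0))
    have hval : 0 + (γ * D + Fr / v' 0) = D := by
      rw [show Fr / v' 0 = (1 - γ) * D from hγD.symm]
      ring
    rw [hval] at h
    apply h.congr
    intro s
    rw [hη_def]
    simp only
    ring
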